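/- G is differentiable at (0, 1) and its Jacobian matrix there is the diagonal matrix with entries C·(1 - 1/R0) - V_H and -(1 + θ). Both diagonal entries (hence both eigenvalues) are negative if and only if R0 < C/(C - V_H). -/

import Mathlib

theorem stmt_8 (C V_H V_L θ R0 : ℝ)
    (hCH : C > V_H) (hHL : V_H > V_L) (hL : V_L > 0) (hθ : θ > 0) (hR0 : R0 > 1)
    (V : ℝ → ℝ) (hV : ∀ n, V n = n * V_H + (1 - n) * V_L)
    (f : ℝ → ℝ)
    (hf1 : ∀ x : ℝ, x < 1 - 1 / R0 → f x = 1 - 1 / (R0 * (1 - x)))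
    (hf2 : ∀ x : ℝ, x ≥ 1 - 1 / R0 → f x = 0)
    (G : ℝ × ℝ → ℝ × ℝ)
    (hG : ∀ p : ℝ × ℝ, G p = (p.1 * (1 - p.1) * (f p.1 * C - V p.2),
        p.2 * (1 - p.2) * (-p.1 + (1 + θ) * (1 - p.1)))) :
    DifferentiableAt ℝ G (0, 1) ∧
    fderiv ℝ G (0, 1) (1, 0) = (C * (1 - 1 / R0) - V_H, 0) ∧
    fderiv ℝ G (0, 1) (0, 1) = (0, -(1 + θ)) ∧
    (C * (1 - 1 / R0) - V_H < 0 ∧ -(1 + θ) < 0 ↔ R0 < C / (C - V_H)) := by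
  have hR0pos : (0:ℝ) < R0 := lt_trans one_pos hR0
  set F : ℝ × ℝ → ℝ × ℝ := fun p =>
    ((p.1 * (1 - p.1)) * ((1 - (R0 * (1 - p.1))⁻¹) * C - (p.2 * V_H + (1 - p.2) * V_L)),
     (p.2 * (1 - p.2)) * (-p.1 + (1 + θ) * (1 - p.1))) with hFdef
  have hopen : IsOpen {p : ℝ × ℝ | p.1 < 1 - 1 / R0} :=
    isOpen_lt continuous_fst continuous_const
  have hmem : ((0:ℝ), (1:ℝ)) ∈ {p : ℝ × ℝ | p.1 < 1 - 1 / R0} := by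
    have h : 1 / R0 < 1 := by rw [div_lt_one hR0pos]; exact hR0
    show ((0:ℝ),(1:ℝ)).1 < 1 - 1 / R0
    simp only []
    linarith
  have hEq : G =ᶠ[nhds ((0:ℝ), (1:ℝ))] F := by
    filter_upwards [hopen.mem_nhds hmem] with p hp
    rw [hG, hf1 p.1 hp, hV]
    simp only [hFdef, one_div]
  have hne : R0 * (1 - ((0:ℝ),(1:ℝ)).1) ≠ 0 := by simp; exact hR0pos.ne'
  have hfst : HasFDerivAt (fun p : ℝ × ℝ => p.1) (ContinuousLinearMap.fst ℝ ℝ ℝ) ((0:ℝ),(1:ℝ)) :=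
    hasFDerivAt_fst
  have hsnd : HasFDerivAt (fun p : ℝ × ℝ => p.2) (ContinuousLinearMap.snd ℝ ℝ ℝ) ((0:ℝ),(1:ℝ)) :=
    hasFDerivAt_snd
  have hone : HasFDerivAt (fun _ : ℝ × ℝ => (1:ℝ)) (0 : ℝ × ℝ →L[ℝ] ℝ) ((0:ℝ),(1:ℝ)) :=
    hasFDerivAt_const 1 _
  have hg := (hone.sub hfst).const_mul R0
  have hinv := hasFDerivAt_inv hne
  have hginv := hinv.comp ((0:ℝ),(1:ℝ)) hg
  have ha := (hone.sub hginv).mul_const C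
  have hb := (hsnd.mul_const V_H).add ((hone.sub hsnd).mul_const V_L)
  have hw := ha.sub hb
  have huv := hfst.mul (hone.sub hfst)
  have hF1 := huv.mul hw
  have h2a := hsnd.mul (hone.sub hsnd)
  have h2b := (hfst.neg).add ((hone.sub hfst).const_mul (1 + θ))
  have hF2 := h2a.mul h2b
  have hF : HasFDerivAt F _ ((0:ℝ),(1:ℝ)) := HasFDerivAt.prodMk hF1 hF2
  have hdiffF : DifferentiableAt ℝ F ((0:ℝ),(1:ℝ)) := hF.differentiableAt
  have hfd : fderiv ℝ G ((0:ℝ),(1:ℝ)) = fderiv ℝ F ((0:ℝ),(1:ℝ)) := hEq.fderiv_eq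
  refine ⟨(hEq.differentiableAt_iff).mpr hdiffF, ?_, ?_, ?_⟩
  · rw [hfd, hF.fderiv]
    simp
    ring
  · rw [hfd, hF.fderiv]
    simp
  · have hC : 0 < C - V_H := by linarith
    have h1 : R0 * (1 / R0) = 1 := mul_one_div_cancel hR0pos.ne'
    rw [lt_div_iff₀ hC]
    constructor
    · rintro ⟨h, -⟩
      nlinarith
    · intro h
      refine ⟨?_, by linarith⟩
      nlinarith
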